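/- Let q be a power of 2, f ∈ F_q[T], and g a nonzero integer constant viewed in F_q. Let W_n be defined by W_0 = 0, W_1 = 1, W_n = f·W_{n-1} + g·W_{n-2}. Then for all n ≥ 1, W_{2n} = f·W_n^2 and W_{2n+1} = (W_{n+1} + g·W_n)^2 in F_q[T]. -/
import Mathlib


open Polynomial

noncomputable def lucasW {R : Type*} [CommRing R] (f g : Polynomial R) : ℕ → Polynomial R
  | 0 => 0
  | 1 => 1
  | n + 2 => f * lucasW f g (n + 1) + g * lucasW f g n

lemma lucasW_succ_succ {R : Type*} [CommRing R] (f g : Polynomial R) (k : ℕ) :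
    lucasW f g (k + 2) = f * lucasW f g (k + 1) + g * lucasW f g k := by
  rw [lucasW]

lemma lucasW_add {R : Type*} [CommRing R] (f g : Polynomial R) (m n : ℕ) :
    lucasW f g (m + n + 1) =
      lucasW f g (m + 1) * lucasW f g (n + 1) + g * lucasW f g m * lucasW f g n := by
  induction m using Nat.twoStepInduction with
  | zero => simp [lucasW]
  | one =>
    rw [show 1 + n + 1 = n + 2 by ring, lucasW_succ_succ]
    simp [lucasW]
  | more m ih ih' =>
    rw [show m + 2 + n + 1 = (m + n + 1) + 2 by ring, lucasW_succ_succ,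
      show m + n + 1 + 1 = m + 1 + n + 1 by ring, ih', ih,
      show m + 2 + 1 = (m + 1) + 2 by ring, lucasW_succ_succ f g (m + 1),
      lucasW_succ_succ f g m]
    ring

theorem lucasW_double_char_two (F : Type*) [Field F] [Fintype F] [CharP F 2]
    (f : Polynomial F) (g : ℤ) (hg : (g : F) ≠ 0) (n : ℕ) (hn : 1 ≤ n) :
    lucasW f (C (g : F)) (2 * n) = f * (lucasW f (C (g : F)) n) ^ 2 ∧
      lucasW f (C (g : F)) (2 * n + 1) =
        (lucasW f (C (g : F)) (n + 1) + C (g : F) * lucasW f (C (g : F)) n) ^ 2 := by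
  have h2f : (2 : F) = 0 := by exact_mod_cast CharP.cast_eq_zero F 2
  have hg1 : (g : F) = 1 := by
    rcases Int.even_or_odd g with ⟨k, hk⟩ | ⟨k, hk⟩
    · exfalso; apply hg
      rw [hk]
      push_cast
      linear_combination (k : F) * h2f
    · rw [hk]
      push_cast
      linear_combination (k : F) * h2f
  simp only [hg1, map_one]
  have h2 : (2 : Polynomial F) = 0 := by
    rw [show (2 : Polynomial F) = C 2 from (map_ofNat C 2).symm, h2f, map_zero]
  obtain ⟨m, rfl⟩ : ∃ m, n = m + 1 := ⟨n - 1, by omega⟩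
  have e2 : lucasW f 1 (m + 2) = f * lucasW f 1 (m + 1) + 1 * lucasW f 1 m := by rw [lucasW]
  constructor
  · rw [show 2 * (m + 1) = m + (m + 1) + 1 by ring, lucasW_add, e2]
    linear_combination (lucasW f 1 m * lucasW f 1 (m + 1)) * h2
  · rw [show 2 * (m + 1) + 1 = (m + 1) + (m + 1) + 1 by ring, lucasW_add]
    linear_combination (- lucasW f 1 (m + 2) * lucasW f 1 (m + 1)) * h2
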